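/- Let d ≥ 1, let A = F₂⟨x₁, …, x_d⟩ be the free algebra over F₂ in d noncommuting indeterminates, and let I be a two-sided ideal of A generated by a set of homogeneous polynomials. Let M > N ≥ 0, let i₁, …, i_M and j₁, …, j_N be indices in {1, …, d}, and suppose the monomial x_{i₁}x_{i₂}⋯x_{i_M} does not lie in I. Then (1+x_{i₁})(1+x_{i₂})⋯(1+x_{i_M}) − (1+x_{j₁})(1+x_{j₂})⋯(1+x_{j_N}) does not lie in I; in particular, the images of these two products in the quotient algebra A/I are distinct. -/

import Mathlib

/-- `p` is a monomial of degree `n` in the free algebra `F₂⟨x₁, …, x_d⟩`: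
a product of `n` indeterminates. -/
def IsMonomialOfDegree {d : ℕ} (n : ℕ) (p : FreeAlgebra (ZMod 2) (Fin d)) : Prop :=
  ∃ f : Fin n → Fin d,
    p = (List.ofFn fun i : Fin n => FreeAlgebra.ι (ZMod 2) (f i)).prod

/-- `p` is homogeneous of degree `n`: an `F₂`-linear combination of monomials of
degree `n`. -/
def IsHomogeneousOfDegree {d : ℕ} (n : ℕ) (p : FreeAlgebra (ZMod 2) (Fin d)) : Prop :=
  p ∈ Submodule.span (ZMod 2) {q : FreeAlgebra (ZMod 2) (Fin d) | IsMonomialOfDegree n q}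


noncomputable section
open FreeAlgebra

abbrev MA (d : ℕ) := MonoidAlgebra (ZMod 2) (FreeMonoid (Fin d))

def E (d : ℕ) : FreeAlgebra (ZMod 2) (Fin d) ≃ₐ[ZMod 2] MA d :=
  FreeAlgebra.equivMonoidAlgebraFreeMonoid

def filt (d n : ℕ) : MA d →ₗ[ZMod 2] MA d where
  toFun p := MonoidAlgebra.ofCoeff (p.coeff.filter (fun w => w.length = n))
  map_add' _ _ := congrArg MonoidAlgebra.ofCoeff Finsupp.filter_add
  map_smul' _ _ := congrArg MonoidAlgebra.ofCoeff Finsupp.filter_smul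

lemma filt_single (n : ℕ) (w : FreeMonoid (Fin d)) (r : ZMod 2) :
    filt d n (MonoidAlgebra.single w r) =
      if w.length = n then MonoidAlgebra.single w r else 0 := by
  split_ifs with h
  · exact congrArg MonoidAlgebra.ofCoeff (Finsupp.filter_single_of_pos _ h)
  · exact congrArg MonoidAlgebra.ofCoeff (Finsupp.filter_single_of_neg _ h)

lemma filt_mul (n : ℕ) (p q : MA d) :
    filt d n (p * q) =
      ∑ k ∈ Finset.range (n + 1), filt d k p * filt d (n - k) q := by
  induction p using MonoidAlgebra.induction_linear with
  | zero => simp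
  | add p p' hp hp' =>
    simp only [add_mul, map_add, hp, hp', ← Finset.sum_add_distrib]
  | single w r =>
    induction q using MonoidAlgebra.induction_linear with
    | zero => simp
    | add q q' hq hq' =>
      simp only [mul_add, map_add, hq, hq', ← Finset.sum_add_distrib]
    | single v s =>
      rw [MonoidAlgebra.single_mul_single, filt_single]
      have key : ∀ k ∈ Finset.range (n + 1),
          filt d k (MonoidAlgebra.single w r) * filt d (n - k) (MonoidAlgebra.single v s) =
          if k = w.length ∧ v.length = n - k then
            MonoidAlgebra.single (w * v) (r * s) else 0 := by
        intro k _
        rw [filt_single, filt_single]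
        by_cases h1 : w.length = k
        · by_cases h2 : v.length = n - k
          · rw [if_pos h1, if_pos h2, if_pos ⟨h1.symm, h2⟩, MonoidAlgebra.single_mul_single]
          · rw [if_pos h1, if_neg h2, if_neg (fun h => h2 h.2), mul_zero]
        · rw [if_neg h1, zero_mul, if_neg (fun h => h1 h.1.symm)]
      rw [Finset.sum_congr rfl key]
      by_cases hw : w.length ≤ n
      · rw [Finset.sum_eq_single w.length
          (fun k _ hk => by simp [hk]) (by simp [Nat.lt_succ_of_le hw])]
        exact if_congr (by rw [FreeMonoid.length_mul]; omega) rfl rfl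
      · rw [Finset.sum_eq_zero, if_neg]
        · rw [FreeMonoid.length_mul]; omega
        · intro k hk
          rw [Finset.mem_range] at hk
          rw [if_neg]; rintro ⟨rfl, -⟩; omega

def proj (d n : ℕ) : FreeAlgebra (ZMod 2) (Fin d) →ₗ[ZMod 2] FreeAlgebra (ZMod 2) (Fin d) :=
  (E d).symm.toLinearMap ∘ₗ filt d n ∘ₗ (E d).toLinearMap

lemma proj_mul (n : ℕ) (x y : FreeAlgebra (ZMod 2) (Fin d)) :
    proj d n (x * y) =
      ∑ k ∈ Finset.range (n + 1), proj d k x * proj d (n - k) y := by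
  simp only [proj, LinearMap.comp_apply, AlgEquiv.toLinearMap_apply, map_mul, filt_mul,
    map_sum]

lemma E_mono (l : List (Fin d)) :
    E d (l.map (FreeAlgebra.ι (ZMod 2))).prod =
      MonoidAlgebra.single (FreeMonoid.ofList l) 1 := by
  induction l with
  | nil => simp [MonoidAlgebra.one_def]
  | cons a t ih =>
    simp only [List.map_cons, List.prod_cons, map_mul, ih]
    rw [show E d (FreeAlgebra.ι (ZMod 2) a) = MonoidAlgebra.single (FreeMonoid.of a) 1 from by
      simp [E, FreeAlgebra.equivMonoidAlgebraFreeMonoid]]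
    rw [MonoidAlgebra.single_mul_single, one_mul]
    rfl

lemma proj_mono (l : List (Fin d)) (n : ℕ) :
    proj d n (l.map (FreeAlgebra.ι (ZMod 2))).prod =
      if l.length = n then (l.map (FreeAlgebra.ι (ZMod 2))).prod else 0 := by
  simp only [proj, LinearMap.comp_apply, AlgEquiv.toLinearMap_apply, E_mono, filt_single]
  rw [show (FreeMonoid.ofList l).length = l.length from rfl]
  split_ifs
  · rw [← E_mono, AlgEquiv.symm_apply_apply]
  · exact map_zero _

lemma proj_homog {m n : ℕ} {f : FreeAlgebra (ZMod 2) (Fin d)}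
    (hf : f ∈ Submodule.span (ZMod 2)
      {q : FreeAlgebra (ZMod 2) (Fin d) | IsMonomialOfDegree m q}) :
    proj d n f = if m = n then f else 0 := by
  induction hf using Submodule.span_induction with
  | mem q hq =>
    obtain ⟨g, rfl⟩ := hq
    have : (List.ofFn fun i : Fin m => FreeAlgebra.ι (ZMod 2) (g i)) =
        (List.ofFn g).map (FreeAlgebra.ι (ZMod 2)) := by
      rw [List.map_ofFn]; rfl
    rw [this, proj_mono, List.length_ofFn]
  | zero => simp
  | add x y _ _ hx hy => rw [map_add, hx, hy]; split_ifs <;> simp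
  | smul c x _ hx => rw [map_smul, hx]; split_ifs <;> simp

lemma proj_one (n : ℕ) : proj d n (1 : FreeAlgebra (ZMod 2) (Fin d)) =
    if n = 0 then 1 else 0 := by
  have := proj_mono (d := d) [] n
  simp only [List.map_nil, List.prod_nil, List.length_nil] at this
  rw [this]; split_ifs with h1 h2 h3 <;> first | rfl | omega

lemma proj_iota (n : ℕ) (a : Fin d) : proj d n (FreeAlgebra.ι (ZMod 2) a) =
    if n = 1 then FreeAlgebra.ι (ZMod 2) a else 0 := by
  have := proj_mono (d := d) [a] n
  simp only [List.map_cons, List.map_nil, List.prod_cons, List.prod_nil, mul_one,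
    List.length_cons, List.length_nil] at this
  rw [this]; split_ifs with h1 h2 h3 <;> first | rfl | omega

lemma proj_oneadd (l : List (Fin d)) (n : ℕ) (hn : l.length ≤ n) :
    proj d n (l.map fun x => 1 + FreeAlgebra.ι (ZMod 2) x).prod =
      if n = l.length then (l.map (FreeAlgebra.ι (ZMod 2))).prod else 0 := by
  induction l generalizing n with
  | nil =>
    simp only [List.map_nil, List.prod_nil, List.length_nil]
    rw [proj_one]
  | cons a t ih =>
    simp only [List.map_cons, List.prod_cons, List.length_cons] at *
    rw [proj_mul]
    have h1n : 1 ≤ n := le_trans (Nat.succ_le_succ (Nat.zero_le _)) hn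
    have key : ∀ k ∈ Finset.range (n + 1),
        proj d k (1 + FreeAlgebra.ι (ZMod 2) a) *
          proj d (n - k) (t.map fun x => 1 + FreeAlgebra.ι (ZMod 2) x).prod =
        if k = 1 then FreeAlgebra.ι (ZMod 2) a *
          proj d (n - 1) (t.map fun x => 1 + FreeAlgebra.ι (ZMod 2) x).prod else 0 := by
      intro k hk
      rw [map_add, proj_one, proj_iota]
      rcases Nat.lt_or_ge k 2 with h | h
      · interval_cases k
        · simp only [if_pos rfl, if_neg one_ne_zero.symm]
          rw [if_pos trivial, Nat.sub_zero, ih n (by omega), if_neg (by omega), mul_zero]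
        · simp
      · rw [if_neg (by omega), if_neg (by omega), add_zero, zero_mul, if_neg (by omega)]
    rw [Finset.sum_congr rfl key, Finset.sum_ite_eq' (Finset.range (n+1)) 1
      (fun _ => ι (ZMod 2) a * proj d (n-1) (t.map fun x => 1 + FreeAlgebra.ι (ZMod 2) x).prod)]
    rw [if_pos (Finset.mem_range.2 (by omega)), ih (n - 1) (by omega), mul_ite, mul_zero]
    exact if_congr (by omega) rfl rfl

lemma proj_mem {F : Set (FreeAlgebra (ZMod 2) (Fin d))}
    (hF : ∀ p ∈ F, ∃ n : ℕ, p ∈ Submodule.span (ZMod 2)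
      {q : FreeAlgebra (ZMod 2) (Fin d) | IsMonomialOfDegree n q})
    {z : FreeAlgebra (ZMod 2) (Fin d)} (hz : z ∈ TwoSidedIdeal.span F) (n : ℕ) :
    proj d n z ∈ TwoSidedIdeal.span F := by
  set I := TwoSidedIdeal.span F with hI
  rw [TwoSidedIdeal.mem_span_iff_mem_addSubgroup_closure] at hz
  induction hz using AddSubgroup.closure_induction with
  | mem x hx =>
    obtain ⟨u, ⟨a, -, f, hf, rfl⟩, b, -, rfl⟩ := hx
    obtain ⟨m, hm⟩ := hF f hf
    have hfI : f ∈ I := TwoSidedIdeal.subset_span hf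
    show (proj d n) (a * f * b) ∈ I
    rw [mul_assoc, proj_mul]
    refine sum_mem fun k _ => ?_
    rw [proj_mul, Finset.mul_sum]
    refine sum_mem fun l _ => ?_
    rw [proj_homog hm]
    split_ifs with h
    · exact I.mul_mem_left _ _ (I.mul_mem_right _ _ hfI)
    · rw [zero_mul, mul_zero]; exact I.zero_mem
  | zero => rw [map_zero]; exact I.zero_mem
  | add x y _ _ hx hy => rw [map_add]; exact I.add_mem hx hy
  | neg x _ hx => rw [map_neg]; exact I.neg_mem hx

theorem prod_one_add_sub_not_mem' {d : ℕ} (hd : 1 ≤ d)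
    (F : Set (FreeAlgebra (ZMod 2) (Fin d)))
    (hF : ∀ p ∈ F, ∃ n : ℕ, IsHomogeneousOfDegree n p)
    (M N : ℕ) (hMN : M > N) (i : Fin M → Fin d) (j : Fin N → Fin d)
    (hmono : (List.ofFn fun k : Fin M => FreeAlgebra.ι (ZMod 2) (i k)).prod ∉
      TwoSidedIdeal.span F) :
    (List.ofFn fun k : Fin M => 1 + FreeAlgebra.ι (ZMod 2) (i k)).prod -
        (List.ofFn fun k : Fin N => 1 + FreeAlgebra.ι (ZMod 2) (j k)).prod ∉
      TwoSidedIdeal.span F := by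
  intro h
  have hM := proj_mem (F := F) hF h M
  rw [map_sub] at hM
  have e1 : (List.ofFn fun k : Fin M => 1 + FreeAlgebra.ι (ZMod 2) (i k)) =
      (List.ofFn i).map (fun x => 1 + FreeAlgebra.ι (ZMod 2) x) := by
    rw [List.map_ofFn]; rfl
  have e2 : (List.ofFn fun k : Fin N => 1 + FreeAlgebra.ι (ZMod 2) (j k)) =
      (List.ofFn j).map (fun x => 1 + FreeAlgebra.ι (ZMod 2) x) := by
    rw [List.map_ofFn]; rfl
  have e3 : (List.ofFn fun k : Fin M => FreeAlgebra.ι (ZMod 2) (i k)) =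
      (List.ofFn i).map (FreeAlgebra.ι (ZMod 2)) := by
    rw [List.map_ofFn]; rfl
  rw [e1, e2, proj_oneadd _ M (by rw [List.length_ofFn]),
    proj_oneadd _ M (by rw [List.length_ofFn]; omega), List.length_ofFn, List.length_ofFn,
    if_pos rfl, if_neg (by omega), sub_zero] at hM
  rw [e3] at hmono
  exact hmono hM

set_option maxHeartbeats 1000000 in
/-- Let `I` be a two-sided ideal of `F₂⟨x₁, …, x_d⟩` generated by homogeneous
polynomials, `M > N`, and suppose the monomial `x_{i₁}⋯x_{i_M}` does not lie in `I`.
Then `(1+x_{i₁})⋯(1+x_{i_M}) − (1+x_{j₁})⋯(1+x_{j_N})` does not lie in `I`; in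
particular the two products are distinct in the quotient. -/
theorem prod_one_add_sub_not_mem {d : ℕ} (hd : 1 ≤ d)
    (F : Set (FreeAlgebra (ZMod 2) (Fin d)))
    (hF : ∀ p ∈ F, ∃ n : ℕ, IsHomogeneousOfDegree n p)
    (M N : ℕ) (hMN : M > N) (i : Fin M → Fin d) (j : Fin N → Fin d)
    (hmono : (List.ofFn fun k : Fin M => FreeAlgebra.ι (ZMod 2) (i k)).prod ∉
      TwoSidedIdeal.span F) :
    (List.ofFn fun k : Fin M => 1 + FreeAlgebra.ι (ZMod 2) (i k)).prod -
        (List.ofFn fun k : Fin N => 1 + FreeAlgebra.ι (ZMod 2) (j k)).prod ∉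
      TwoSidedIdeal.span F :=
  prod_one_add_sub_not_mem' hd F hF M N hMN i j hmono
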